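/- The set S = {(p,μ) ∈ ℝ² : p > 0 and the function y ↦ E(y,p,μ) has a unique global maximum point ȳ with ∂²E/∂y²(ȳ,p,μ) < 0} is an open subset of ℝ². -/

import Mathlib

/-- The single-cell partition function `K(y,p,μ)` with cell volume `υ` and ratio `a`. -/
noncomputable def K (υ a y p μ : ℝ) : ℝ :=
  ∑' n : ℕ, (υ ^ n / (Nat.factorial n : ℝ)) *
    Real.exp ((y + μ) * n - (a * p / 2) * (n : ℝ) ^ 2)

/-- The function `E(y,p,μ) = -y²/(2p) + ln K(y,p,μ)`. -/
noncomputable def E (υ a y p μ : ℝ) : ℝ :=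
  -(y ^ 2) / (2 * p) + Real.log (K υ a y p μ)


open Real

namespace SP

/-- summand -/
noncomputable def g (υ a : ℝ) (k : ℕ) (y p μ : ℝ) (n : ℕ) : ℝ :=
  (n : ℝ) ^ k * (υ ^ n / (Nat.factorial n : ℝ)) *
    Real.exp ((y + μ) * n - (a * p / 2) * (n : ℝ) ^ 2)

noncomputable def Kk (υ a : ℝ) (k : ℕ) (y p μ : ℝ) : ℝ := ∑' n : ℕ, g υ a k y p μ n

lemma summable_aux (k : ℕ) {r : ℝ} (hr : 0 ≤ r) :
    Summable (fun n : ℕ => (n : ℝ) ^ k * (r ^ n / (Nat.factorial n : ℝ))) := by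
  refine Summable.of_nonneg_of_le (fun n => by positivity)
    (fun n => ?_) (Real.summable_pow_div_factorial ((2:ℝ)^k * r))
  have h1 : (n : ℝ) ≤ 2 ^ n := by exact_mod_cast n.lt_two_pow_self.le
  have h2 : (n : ℝ) ^ k ≤ ((2:ℝ) ^ k) ^ n := by
    calc (n:ℝ)^k ≤ ((2:ℝ)^n)^k := pow_le_pow_left₀ n.cast_nonneg h1 k
    _ = ((2:ℝ)^k)^n := by rw [← pow_mul, ← pow_mul, Nat.mul_comm]
  calc (n:ℝ)^k * (r^n / n.factorial) ≤ ((2:ℝ)^k)^n * (r^n / n.factorial) := by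
        apply mul_le_mul_of_nonneg_right h2; positivity
  _ = ((2:ℝ)^k * r)^n / n.factorial := by rw [mul_pow]; ring

lemma g_nonneg {υ a : ℝ} (hυ : 0 ≤ υ) (k : ℕ) (y p μ : ℝ) (n : ℕ) :
    0 ≤ g υ a k y p μ n := by
  unfold g; positivity

lemma g_le {υ a y p μ B : ℝ} (hυ : 0 ≤ υ) (hap : 0 ≤ a * p) (hB : y + μ ≤ B)
    (k : ℕ) (n : ℕ) :
    g υ a k y p μ n ≤ (n : ℝ) ^ k * ((υ * Real.exp B) ^ n / (Nat.factorial n : ℝ)) := by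
  unfold g
  have hexp : Real.exp ((y + μ) * n - (a * p / 2) * (n : ℝ) ^ 2) ≤ Real.exp (B * n) := by
    apply Real.exp_le_exp.2
    have h1 : (y + μ) * n ≤ B * n := mul_le_mul_of_nonneg_right hB n.cast_nonneg
    nlinarith [sq_nonneg (n : ℝ)]
  calc (n : ℝ) ^ k * (υ ^ n / (Nat.factorial n : ℝ)) *
      Real.exp ((y + μ) * n - (a * p / 2) * (n : ℝ) ^ 2)
      ≤ (n : ℝ) ^ k * (υ ^ n / (Nat.factorial n : ℝ)) * Real.exp (B * n) := by
        apply mul_le_mul_of_nonneg_left hexp; positivity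
    _ = (n : ℝ) ^ k * ((υ * Real.exp B) ^ n / (Nat.factorial n : ℝ)) := by
        rw [show B*(n:ℝ) = (n:ℝ)*B by ring, Real.exp_nat_mul, mul_pow]; ring

lemma summable_g {υ a y p μ : ℝ} (hυ : 0 ≤ υ) (hap : 0 ≤ a * p) (k : ℕ) :
    Summable (g υ a k y p μ) := by
  refine Summable.of_nonneg_of_le (g_nonneg hυ k y p μ)
    (g_le hυ hap le_rfl k) (summable_aux k ?_)
  positivity

lemma K_eq (υ a y p μ : ℝ) : K υ a y p μ = Kk υ a 0 y p μ := by
  unfold K Kk g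
  refine tsum_congr fun n => by ring

lemma one_le_K {υ a y p μ : ℝ} (hυ : 0 ≤ υ) (hap : 0 ≤ a * p) :
    1 ≤ Kk υ a 0 y p μ := by
  have h0 : g υ a 0 y p μ 0 = 1 := by simp [g]
  have := Summable.le_tsum (summable_g hυ hap 0) 0 (fun n _ => g_nonneg hυ 0 y p μ n)
  rw [h0] at this
  exact this

lemma K_pos {υ a y p μ : ℝ} (hυ : 0 ≤ υ) (hap : 0 ≤ a * p) :
    0 < Kk υ a 0 y p μ := lt_of_lt_of_le one_pos (one_le_K hυ hap)

end SP

namespace SP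

lemma hasDerivAt_g {υ a p μ : ℝ} (k n : ℕ) (y : ℝ) :
    HasDerivAt (fun z => g υ a k z p μ n) (g υ a (k+1) y p μ n) y := by
  have h1 : HasDerivAt (fun z : ℝ => (z + μ) * n - (a * p / 2) * (n:ℝ)^2) (n : ℝ) y := by
    have := ((hasDerivAt_id y).add_const μ).mul_const (n : ℝ)
    simpa using (this.sub_const ((a * p / 2) * (n:ℝ)^2))
  have h2 := (h1.exp).const_mul ((n : ℝ) ^ k * (υ ^ n / (Nat.factorial n : ℝ)))
  refine h2.congr_deriv ?_
  unfold g; rw [pow_succ]; ring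

lemma hasDerivAt_Kk {υ a p μ : ℝ} (hυ : 0 ≤ υ) (hap : 0 ≤ a * p) (k : ℕ) (y : ℝ) :
    HasDerivAt (fun z => Kk υ a k z p μ) (Kk υ a (k+1) y p μ) y := by
  have hB : ∀ n z, z ∈ Set.Ioo (y - 1) (y + 1) →
      ‖g υ a (k+1) z p μ n‖ ≤ (n : ℝ) ^ (k+1) * ((υ * Real.exp (y + 1 + μ)) ^ n / (Nat.factorial n : ℝ)) := by
    intro n z hz
    rw [Real.norm_eq_abs, abs_of_nonneg (g_nonneg hυ _ _ _ _ _)]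
    exact g_le hυ hap (by linarith [hz.2]) (k+1) n
  have hy : y ∈ Set.Ioo (y - 1) (y + 1) := Set.mem_Ioo.2 ⟨by linarith, by linarith⟩
  exact hasDerivAt_tsum_of_isPreconnected
    (summable_aux (k+1) (by positivity : (0:ℝ) ≤ υ * Real.exp (y + 1 + μ)))
    isOpen_Ioo (isPreconnected_Ioo)
    (fun n z _ => hasDerivAt_g k n z) hB
    hy (summable_g hυ hap k) hy

lemma continuous_g {υ a : ℝ} (k n : ℕ) :
    Continuous fun x : ℝ × ℝ × ℝ => g υ a k x.1 x.2.1 x.2.2 n := by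
  unfold g
  apply Continuous.mul continuous_const
  apply Real.continuous_exp.comp
  apply Continuous.sub
  · exact ((continuous_fst.add continuous_snd.snd).mul continuous_const)
  · exact Continuous.mul ((continuous_const.mul continuous_snd.fst).div_const 2) continuous_const

lemma contAt_Kk {υ a : ℝ} (hυ : 0 ≤ υ) (ha : 0 ≤ a) (k : ℕ) (x₀ : ℝ × ℝ × ℝ)
    (hp : 0 < x₀.2.1) :
    ContinuousAt (fun x : ℝ × ℝ × ℝ => Kk υ a k x.1 x.2.1 x.2.2) x₀ := by
  set B : ℝ := x₀.1 + x₀.2.2 + 1 with hBdef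
  set U : Set (ℝ × ℝ × ℝ) := {x | x.1 + x.2.2 < B ∧ 0 < x.2.1} with hUdef
  have hUopen : IsOpen U := by
    apply IsOpen.inter
    · exact isOpen_lt (continuous_fst.add (continuous_snd.snd)) continuous_const
    · exact isOpen_lt continuous_const (continuous_snd.fst)
  have hx₀ : x₀ ∈ U := ⟨by simp [hBdef], hp⟩
  have hcont : ContinuousOn (fun x : ℝ × ℝ × ℝ => Kk υ a k x.1 x.2.1 x.2.2) U := by
    apply continuousOn_tsum (u := fun n : ℕ => (n : ℝ) ^ k * ((υ * Real.exp B) ^ n / (Nat.factorial n : ℝ)))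
      (fun n => (SP.continuous_g (υ:=υ) (a:=a) k n).continuousOn)
      (summable_aux k (by positivity))
    intro n x hx
    rw [Real.norm_eq_abs, abs_of_nonneg (g_nonneg hυ _ _ _ _ _)]
    exact g_le hυ (by nlinarith [hx.2] : 0 ≤ a * x.2.1) hx.1.le k n
  exact hcont.continuousAt (hUopen.mem_nhds hx₀)

end SP

namespace SP

noncomputable def E1 (υ a y p μ : ℝ) : ℝ :=
  -y / p + Kk υ a 1 y p μ / Kk υ a 0 y p μ

noncomputable def E2 (υ a y p μ : ℝ) : ℝ :=
  -1 / p + (Kk υ a 2 y p μ * Kk υ a 0 y p μ - (Kk υ a 1 y p μ) ^ 2) / (Kk υ a 0 y p μ) ^ 2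

lemma hasDerivAt_E {υ a p μ : ℝ} (hυ : 0 ≤ υ) (ha : 0 ≤ a) (hp : 0 < p) (y : ℝ) :
    HasDerivAt (fun z => E υ a z p μ) (E1 υ a y p μ) y := by
  have hap : 0 ≤ a * p := mul_nonneg ha hp.le
  have hK := hasDerivAt_Kk (μ := μ) hυ hap 0 y
  have hKpos : Kk υ a 0 y p μ ≠ 0 := (K_pos hυ hap).ne'
  have h1 : HasDerivAt (fun z : ℝ => -(z ^ 2) / (2 * p)) (-y/p) y := by
    have := ((hasDerivAt_pow 2 y).neg).div_const (2 * p)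
    refine this.congr_deriv ?_
    field_simp
    ring
  have h2 : HasDerivAt (fun z => Real.log (Kk υ a 0 z p μ))
      (Kk υ a 1 y p μ / Kk υ a 0 y p μ) y := hK.log hKpos
  have h3 := h1.add h2
  have : (fun z => E υ a z p μ) = fun z => -(z ^ 2) / (2 * p) + Real.log (Kk υ a 0 z p μ) := by
    funext z; rw [E, K_eq]
  rw [this]
  exact h3

lemma hasDerivAt_E1 {υ a p μ : ℝ} (hυ : 0 ≤ υ) (ha : 0 ≤ a) (hp : 0 < p) (y : ℝ) :
    HasDerivAt (fun z => E1 υ a z p μ) (E2 υ a y p μ) y := by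
  have hap : 0 ≤ a * p := mul_nonneg ha hp.le
  have hK0 := hasDerivAt_Kk (μ := μ) hυ hap 0 y
  have hK1 := hasDerivAt_Kk (μ := μ) hυ hap 1 y
  have hKpos : Kk υ a 0 y p μ ≠ 0 := (K_pos hυ hap).ne'
  have h1 : HasDerivAt (fun z : ℝ => -z / p) (-1/p) y := by
    have := ((hasDerivAt_id y).neg).div_const p
    exact this.congr_deriv (by ring)
  have h2 := hK1.div hK0 hKpos
  have h3 := h1.add h2
  refine h3.congr_deriv ?_
  unfold E2
  ring_nf

lemma deriv_E {υ a p μ : ℝ} (hυ : 0 ≤ υ) (ha : 0 ≤ a) (hp : 0 < p) :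
    deriv (fun z => E υ a z p μ) = fun y => E1 υ a y p μ := by
  funext y; exact (hasDerivAt_E hυ ha hp y).deriv

lemma deriv2_E {υ a p μ : ℝ} (hυ : 0 ≤ υ) (ha : 0 ≤ a) (hp : 0 < p) (y : ℝ) :
    deriv (deriv (fun z => E υ a z p μ)) y = E2 υ a y p μ := by
  rw [deriv_E hυ ha hp]
  exact (hasDerivAt_E1 hυ ha hp y).deriv

lemma contAt_E {υ a : ℝ} (hυ : 0 ≤ υ) (ha : 0 ≤ a) (x₀ : ℝ × ℝ × ℝ) (hp : 0 < x₀.2.1) :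
    ContinuousAt (fun x : ℝ × ℝ × ℝ => E υ a x.1 x.2.1 x.2.2) x₀ := by
  have hap : 0 ≤ a * x₀.2.1 := mul_nonneg ha hp.le
  have h1 : ContinuousAt (fun x : ℝ × ℝ × ℝ => -(x.1 ^ 2) / (2 * x.2.1)) x₀ := by
    apply ContinuousAt.div
    · exact (continuous_fst.pow 2).neg.continuousAt
    · exact (continuous_const.mul continuous_snd.fst).continuousAt
    · positivity
  have h2 : ContinuousAt (fun x : ℝ × ℝ × ℝ => Real.log (Kk υ a 0 x.1 x.2.1 x.2.2)) x₀ :=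
    ContinuousAt.log (contAt_Kk hυ ha 0 x₀ hp) (K_pos hυ hap).ne'
  have : (fun x : ℝ × ℝ × ℝ => E υ a x.1 x.2.1 x.2.2)
      = fun x => -(x.1 ^ 2) / (2 * x.2.1) + Real.log (Kk υ a 0 x.1 x.2.1 x.2.2) := by
    funext x; rw [E, K_eq]
  rw [this]
  exact h1.add h2

lemma contAt_E1 {υ a : ℝ} (hυ : 0 ≤ υ) (ha : 0 ≤ a) (x₀ : ℝ × ℝ × ℝ) (hp : 0 < x₀.2.1) :
    ContinuousAt (fun x : ℝ × ℝ × ℝ => E1 υ a x.1 x.2.1 x.2.2) x₀ := by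
  have hap : 0 ≤ a * x₀.2.1 := mul_nonneg ha hp.le
  unfold E1
  apply ContinuousAt.add
  · exact ContinuousAt.div (continuous_fst.neg.continuousAt)
      (continuous_snd.fst.continuousAt) hp.ne'
  · exact ContinuousAt.div (contAt_Kk hυ ha 1 x₀ hp) (contAt_Kk hυ ha 0 x₀ hp)
      (K_pos hυ hap).ne'

lemma contAt_E2 {υ a : ℝ} (hυ : 0 ≤ υ) (ha : 0 ≤ a) (x₀ : ℝ × ℝ × ℝ) (hp : 0 < x₀.2.1) :
    ContinuousAt (fun x : ℝ × ℝ × ℝ => E2 υ a x.1 x.2.1 x.2.2) x₀ := by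
  have hap : 0 ≤ a * x₀.2.1 := mul_nonneg ha hp.le
  unfold E2
  apply ContinuousAt.add
  · exact ContinuousAt.div continuousAt_const (continuous_snd.fst.continuousAt) hp.ne'
  · refine ContinuousAt.div ?_ ((contAt_Kk hυ ha 0 x₀ hp).pow 2) (pow_ne_zero 2 (K_pos hυ hap).ne')
    exact ((contAt_Kk hυ ha 2 x₀ hp).mul (contAt_Kk hυ ha 0 x₀ hp)).sub
      ((contAt_Kk hυ ha 1 x₀ hp).pow 2)

end SP

namespace SP

lemma E_le {υ a y p μ : ℝ} (hυ : 0 < υ) (ha : 1 < a) (hp : 0 < p) :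
    E υ a y p μ ≤ -((1 - 1/a) / (2*p)) * y^2 + υ * Real.exp μ := by
  have hap : 0 < a * p := by positivity
  have hexp_eq : Real.exp (υ * Real.exp μ)
      = ∑' n : ℕ, (υ * Real.exp μ) ^ n / (Nat.factorial n : ℝ) := by
    rw [Real.exp_eq_exp_ℝ, NormedSpace.exp_eq_tsum_div]
  have hterm : ∀ n : ℕ, g υ a 0 y p μ n
      ≤ Real.exp (y^2/(2*(a*p))) * ((υ * Real.exp μ) ^ n / (Nat.factorial n : ℝ)) := by
    intro n
    have hle : (y + μ) * n - (a*p/2) * (n:ℝ)^2 ≤ y^2/(2*(a*p)) + μ * n := by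
      have h1 : y * n - (a*p/2) * (n:ℝ)^2 ≤ y^2/(2*(a*p)) := by
        rw [le_div_iff₀ (by positivity : (0:ℝ) < 2*(a*p))]
        nlinarith [sq_nonneg (y - a*p*n)]
      linarith [h1]
    have h3 : Real.exp ((y + μ) * n - (a*p/2) * (n:ℝ)^2)
        ≤ Real.exp (y^2/(2*(a*p))) * Real.exp (μ * n) := by
      rw [← Real.exp_add]; exact Real.exp_le_exp.2 hle
    calc g υ a 0 y p μ n
        = (υ^n / (Nat.factorial n : ℝ)) * Real.exp ((y + μ) * n - (a*p/2) * (n:ℝ)^2) := by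
          unfold g; ring
      _ ≤ (υ^n / (Nat.factorial n : ℝ)) * (Real.exp (y^2/(2*(a*p))) * Real.exp (μ * n)) := by
          apply mul_le_mul_of_nonneg_left h3; positivity
      _ = Real.exp (y^2/(2*(a*p))) * ((υ * Real.exp μ) ^ n / (Nat.factorial n : ℝ)) := by
          rw [show μ * (n:ℝ) = (n:ℝ) * μ by ring, Real.exp_nat_mul, mul_pow]; ring
  have hsumR : Summable (fun n : ℕ =>
      Real.exp (y^2/(2*(a*p))) * ((υ * Real.exp μ) ^ n / (Nat.factorial n : ℝ))) :=
    (Real.summable_pow_div_factorial _).mul_left _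
  have hK_le : Kk υ a 0 y p μ ≤ Real.exp (y^2/(2*(a*p))) * Real.exp (υ * Real.exp μ) := by
    have := Summable.tsum_le_tsum hterm (summable_g hυ.le hap.le 0) hsumR
    rwa [tsum_mul_left, ← hexp_eq] at this
  have hlog : Real.log (Kk υ a 0 y p μ) ≤ y^2/(2*(a*p)) + υ * Real.exp μ := by
    calc Real.log (Kk υ a 0 y p μ)
        ≤ Real.log (Real.exp (y^2/(2*(a*p))) * Real.exp (υ * Real.exp μ)) := by
          apply Real.log_le_log (K_pos hυ.le hap.le) hK_le
      _ = y^2/(2*(a*p)) + υ * Real.exp μ := by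
          rw [← Real.exp_add, Real.log_exp]
  have hE : E υ a y p μ = -(y^2)/(2*p) + Real.log (Kk υ a 0 y p μ) := by rw [E, K_eq]
  rw [hE]
  have : -(y^2)/(2*p) + y^2/(2*(a*p)) = -((1 - 1/a) / (2*p)) * y^2 := by
    field_simp
    ring
  linarith [hlog]

end SP

namespace SP

lemma unif_cont {F : ℝ × ℝ × ℝ → ℝ} (hF : ∀ x : ℝ × ℝ × ℝ, 0 < x.2.1 → ContinuousAt F x)
    (R : ℝ) (q₀ : ℝ × ℝ) (hq : 0 < q₀.1) {ε : ℝ} (hε : 0 < ε) :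
    ∃ η > 0, ∀ y ∈ Set.Icc (-R) R, ∀ q : ℝ × ℝ, dist q q₀ ≤ η →
      |F (y, q.1, q.2) - F (y, q₀.1, q₀.2)| < ε := by
  set r₀ : ℝ := q₀.1 / 2 with hr₀
  set C : Set (ℝ × ℝ × ℝ) := Set.Icc (-R) R ×ˢ Metric.closedBall q₀ r₀ with hC
  have hCc : IsCompact C := isCompact_Icc.prod (isCompact_closedBall q₀ r₀)
  have hpos : ∀ x ∈ C, 0 < x.2.1 := by
    intro x hx
    have h1 : dist x.2 q₀ ≤ r₀ := hx.2
    have h2 : dist x.2.1 q₀.1 ≤ r₀ := le_trans (by rw [Prod.dist_eq]; exact le_max_left _ _) h1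
    rw [Real.dist_eq, abs_le] at h2
    simp only [hr₀] at h2 ⊢
    linarith [h2.1]
  have hcont : ContinuousOn F C := fun x hx => (hF x (hpos x hx)).continuousWithinAt
  have huc := hCc.uniformContinuousOn_of_continuous hcont
  rw [Metric.uniformContinuousOn_iff] at huc
  obtain ⟨η', hη', H⟩ := huc ε hε
  refine ⟨min (η' / 2) r₀, by positivity, fun y hy q hq' => ?_⟩
  have hqC : (y, q.1, q.2) ∈ C := by
    refine ⟨hy, ?_⟩
    simp only [Metric.mem_closedBall]
    calc dist (q.1, q.2) q₀ = dist q q₀ := rfl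
      _ ≤ min (η' / 2) r₀ := hq'
      _ ≤ r₀ := min_le_right _ _
  have hq₀C : (y, q₀.1, q₀.2) ∈ C := by
    refine ⟨hy, ?_⟩
    simp only [Metric.mem_closedBall]
    calc dist (q₀.1, q₀.2) q₀ = 0 := by simp
      _ ≤ r₀ := by positivity
  have hd : dist ((y, q.1, q.2) : ℝ × ℝ × ℝ) (y, q₀.1, q₀.2) < η' := by
    rw [Prod.dist_eq]
    simp only [dist_self]
    have : dist ((q.1, q.2) : ℝ × ℝ) (q₀.1, q₀.2) = dist q q₀ := rfl
    rw [this]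
    calc max 0 (dist q q₀) = dist q q₀ := max_eq_right dist_nonneg
      _ ≤ min (η' / 2) r₀ := hq'
      _ ≤ η' / 2 := min_le_left _ _
      _ < η' := by linarith
  have := H _ hqC _ hq₀C hd
  rwa [Real.dist_eq] at this

end SP

namespace SP

lemma dist_fst' (q q₀ : ℝ × ℝ) : |q.1 - q₀.1| ≤ dist q q₀ := by
  calc |q.1 - q₀.1| = dist q.1 q₀.1 := (Real.dist_eq _ _).symm
    _ ≤ dist q q₀ := by rw [Prod.dist_eq]; exact le_max_left _ _

lemma dist_snd' (q q₀ : ℝ × ℝ) : |q.2 - q₀.2| ≤ dist q q₀ := by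
  calc |q.2 - q₀.2| = dist q.2 q₀.2 := (Real.dist_eq _ _).symm
    _ ≤ dist q q₀ := by rw [Prod.dist_eq]; exact le_max_right _ _

end SP

theorem stmt_2 (υ a : ℝ) (hυ : 0 < υ) (ha : 1 < a) :
    IsOpen {q : ℝ × ℝ | 0 < q.1 ∧ ∃ ybar : ℝ,
      (∀ y : ℝ, E υ a y q.1 q.2 ≤ E υ a ybar q.1 q.2) ∧
      (∀ y' : ℝ, (∀ y : ℝ, E υ a y q.1 q.2 ≤ E υ a y' q.1 q.2) → y' = ybar) ∧
      deriv (deriv (fun y => E υ a y q.1 q.2)) ybar < 0} := by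
  have hυ0 : (0:ℝ) ≤ υ := hυ.le
  have ha0 : (0:ℝ) ≤ a := by linarith
  rw [Metric.isOpen_iff]
  rintro q₀ ⟨hp₀, ybar, hmax, huniq, hD2⟩
  set m : ℝ := E υ a ybar q₀.1 q₀.2 with hm
  clear_value m
  have hmax' : ∀ y : ℝ, E υ a y q₀.1 q₀.2 ≤ E υ a ybar q₀.1 q₀.2 :=
    fun y => (hmax y).trans_eq hm
  -- first derivative vanishes at the max
  have hE1bar : SP.E1 υ a ybar q₀.1 q₀.2 = 0 := by
    have hloc : IsLocalMax (fun y => E υ a y q₀.1 q₀.2) ybar :=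
      Filter.Eventually.of_forall hmax'
    have h0 := hloc.deriv_eq_zero
    rw [SP.deriv_E hυ0 ha0 hp₀] at h0
    exact h0
  have hE2bar : SP.E2 υ a ybar q₀.1 q₀.2 < 0 := by
    rw [← SP.deriv2_E hυ0 ha0 hp₀]; exact hD2
  -- continuity facts at the base parameters
  have hinner : ∀ y : ℝ, ContinuousAt (fun z : ℝ => ((z, q₀.1, q₀.2) : ℝ × ℝ × ℝ)) y :=
    fun y => (continuous_id.prodMk continuous_const).continuousAt
  have hcontE2y : ∀ y : ℝ, ContinuousAt (fun z => SP.E2 υ a z q₀.1 q₀.2) y := fun y =>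
    ContinuousAt.comp (g := fun x : ℝ × ℝ × ℝ => SP.E2 υ a x.1 x.2.1 x.2.2)
      (f := fun z : ℝ => ((z, q₀.1, q₀.2) : ℝ × ℝ × ℝ))
      (SP.contAt_E2 hυ0 ha0 (y, q₀.1, q₀.2) hp₀) (hinner y)
  have hEder : ∀ y : ℝ, HasDerivAt (fun z => E υ a z q₀.1 q₀.2) (SP.E1 υ a y q₀.1 q₀.2) y :=
    fun y => SP.hasDerivAt_E hυ0 ha0 hp₀ y
  -- choose δ with E2 < 0 on the band
  have hnb : {y : ℝ | SP.E2 υ a y q₀.1 q₀.2 < 0} ∈ nhds ybar :=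
    (hcontE2y ybar).preimage_mem_nhds (Iio_mem_nhds hE2bar)
  obtain ⟨ε₀, hε₀, hball⟩ := Metric.mem_nhds_iff.1 hnb
  set δ : ℝ := ε₀ / 2 with hδdef
  have hδ : 0 < δ := by positivity
  clear_value δ
  have hband_base : ∀ y ∈ Set.Icc (ybar - δ) (ybar + δ), SP.E2 υ a y q₀.1 q₀.2 < 0 := by
    intro y hy
    apply hball
    rw [Metric.mem_ball, Real.dist_eq, abs_lt]
    constructor <;> [linarith [hy.1, hδdef.le, hδdef.ge]; linarith [hy.2, hδdef.le, hδdef.ge]]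
  have hybar_mem : ybar ∈ Set.Icc (ybar - δ) (ybar + δ) := by
    constructor <;> linarith
  -- max of E2 on the band at base params, value -c
  obtain ⟨z, hz, hzmax⟩ := isCompact_Icc.exists_isMaxOn ⟨ybar, hybar_mem⟩
    (fun y _ => (hcontE2y y).continuousWithinAt)
  set c : ℝ := -(SP.E2 υ a z q₀.1 q₀.2) with hcdef
  have hc : 0 < c := by
    have := hband_base z hz
    simp only [hcdef]; linarith
  have hcval : SP.E2 υ a z q₀.1 q₀.2 = -c := by rw [hcdef]; ring
  clear_value c
  -- E1 is strictly decreasing on the band at base params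
  have hanti_base : StrictAntiOn (fun y => SP.E1 υ a y q₀.1 q₀.2)
      (Set.Icc (ybar - δ) (ybar + δ)) := by
    apply strictAntiOn_of_deriv_neg (convex_Icc _ _)
      (fun y _ => ((SP.hasDerivAt_E1 hυ0 ha0 hp₀ y).continuousAt).continuousWithinAt)
    intro y hy
    rw [interior_Icc] at hy
    rw [(SP.hasDerivAt_E1 hυ0 ha0 hp₀ y).deriv]
    exact hband_base y (Set.Ioo_subset_Icc_self hy)
  have hmemL : ybar - δ ∈ Set.Icc (ybar - δ) (ybar + δ) := Set.mem_Icc.2 ⟨le_rfl, by linarith⟩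
  have hmemR : ybar + δ ∈ Set.Icc (ybar - δ) (ybar + δ) := Set.mem_Icc.2 ⟨by linarith, le_rfl⟩
  have hE1L : 0 < SP.E1 υ a (ybar - δ) q₀.1 q₀.2 := by
    simpa only [hE1bar] using hanti_base hmemL hybar_mem (by linarith)
  have hE1R : SP.E1 υ a (ybar + δ) q₀.1 q₀.2 < 0 := by
    simpa only [hE1bar] using hanti_base hybar_mem hmemR (by linarith)
  -- choice of R
  have h1a : 1/a < 1 := by rw [div_lt_one (by linarith)]; linarith
  set Aco : ℝ := (1 - 1/a) / (4 * q₀.1) with hAdef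
  have hApos : 0 < Aco := by
    have h4 : 0 < 4 * q₀.1 := by linarith
    rw [hAdef]
    exact div_pos (by linarith) h4
  clear_value Aco
  set Cμ : ℝ := υ * Real.exp (q₀.2 + 1) with hCdef
  clear_value Cμ
  set R : ℝ := max (|ybar| + δ + 1) ((max (Cμ - m + 1) 0 + 1) / Aco) with hRdef
  have hR1 : |ybar| + δ + 1 ≤ R := hRdef ▸ le_max_left _ _
  have hRD : (max (Cμ - m + 1) 0 + 1) / Aco ≤ R := hRdef ▸ le_max_right _ _
  clear_value R
  have hRpos : 1 ≤ R := le_trans (by linarith [abs_nonneg ybar]) hR1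
  have hRsq : Cμ - m + 1 < Aco * R ^ 2 := by
    have h1 : max (Cμ - m + 1) 0 + 1 ≤ Aco * R := by
      rw [div_le_iff₀ hApos] at hRD; linarith [hRD]
    have h2 : R ≤ R ^ 2 := by nlinarith
    have h3 : Cμ - m + 1 ≤ max (Cμ - m + 1) 0 := le_max_left _ _
    have h4 : Aco * R ≤ Aco * R ^ 2 := mul_le_mul_of_nonneg_left h2 hApos.le
    linarith
  -- coercivity: far away, E is small, uniformly in nearby parameters
  have hcoerce : ∀ q : ℝ × ℝ, dist q q₀ ≤ min (q₀.1 / 2) 1 → ∀ y : ℝ, R ≤ |y| →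
      E υ a y q.1 q.2 < m - 1 := by
    intro q hq y hy
    have hq1 : |q.1 - q₀.1| ≤ q₀.1 / 2 :=
      le_trans (SP.dist_fst' q q₀) (le_trans hq (min_le_left _ _))
    have hq2 : |q.2 - q₀.2| ≤ 1 :=
      le_trans (SP.dist_snd' q q₀) (le_trans hq (min_le_right _ _))
    rw [abs_le] at hq1 hq2
    have hp : 0 < q.1 := by linarith [hq1.1]
    have hple : q.1 ≤ 2 * q₀.1 := by linarith [hq1.2]
    have hEle := SP.E_le (y := y) (μ := q.2) hυ ha hp
    have hcoeff : Aco ≤ (1 - 1/a) / (2 * q.1) := by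
      rw [hAdef]
      exact div_le_div_of_nonneg_left (by linarith) (by linarith) (by linarith)
    have hCle : υ * Real.exp q.2 ≤ Cμ := by
      rw [hCdef]
      exact mul_le_mul_of_nonneg_left (Real.exp_le_exp.2 (by linarith [hq2.2])) hυ0
    have hy2 : R ^ 2 ≤ y ^ 2 := by
      have h0 : (0:ℝ) ≤ R := by linarith
      calc R ^ 2 ≤ |y| ^ 2 := pow_le_pow_left₀ h0 hy 2
        _ = y ^ 2 := sq_abs y
    have hsq : 0 ≤ y ^ 2 := sq_nonneg y
    have hb1 : Aco * y ^ 2 ≤ ((1 - 1/a) / (2 * q.1)) * y ^ 2 :=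
      mul_le_mul_of_nonneg_right hcoeff hsq
    have hb2 : Aco * R ^ 2 ≤ Aco * y ^ 2 := mul_le_mul_of_nonneg_left hy2 hApos.le
    linarith
  -- the annulus
  have hAc : IsCompact (Set.Icc (-R) R \ Set.Ioo (ybar - δ) (ybar + δ)) :=
    isCompact_Icc.diff isOpen_Ioo
  have hybar_absR : |ybar| + δ ≤ R := by linarith
  have hbandIcc : Set.Icc (ybar - δ) (ybar + δ) ⊆ Set.Icc (-R) R := by
    intro y hy
    constructor
    · have := neg_abs_le ybar; linarith [hy.1]
    · have := le_abs_self ybar; linarith [hy.2]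
  have hAne : (Set.Icc (-R) R \ Set.Ioo (ybar - δ) (ybar + δ)).Nonempty := by
    refine ⟨R, ⟨⟨by linarith, le_rfl⟩, ?_⟩⟩
    intro hmem
    have := le_abs_self ybar
    linarith [hmem.2]
  have hEy : ∀ y : ℝ, ContinuousAt (fun z => E υ a z q₀.1 q₀.2) y :=
    fun y => (hEder y).continuousAt
  obtain ⟨y₁, hy₁A, hy₁max⟩ := hAc.exists_isMaxOn hAne
    (fun y _ => (hEy y).continuousWithinAt)
  set m₁ : ℝ := E υ a y₁ q₀.1 q₀.2 with hm₁def
  clear_value m₁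
  have hbarIoo : ybar ∈ Set.Ioo (ybar - δ) (ybar + δ) := by constructor <;> linarith
  have hm₁ : m₁ < m := by
    rw [hm₁def]
    rcases lt_or_eq_of_le (hmax y₁) with h | h
    · exact h
    · exfalso
      have hyeq : y₁ = ybar := huniq y₁ (fun y => (hmax y).trans_eq h.symm)
      exact hy₁A.2 (hyeq ▸ hbarIoo)
  set ε₁ : ℝ := m - m₁ with hε₁def
  have hε₁ : 0 < ε₁ := by simp only [hε₁def]; linarith
  clear_value ε₁
  set εE : ℝ := min (ε₁ / 2) (1 / 2) with hεEdef
  have hεE : 0 < εE := by rw [hεEdef]; positivity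
  have hεE1' : εE ≤ ε₁ / 2 := hεEdef ▸ min_le_left _ _
  have hεE2' : εE ≤ 1 / 2 := hεEdef ▸ min_le_right _ _
  clear_value εE
  have hεE1 : εE ≤ ε₁ / 2 := hεE1'
  have hεE2 : εE ≤ 1 / 2 := hεE2'
  -- uniform continuity of E and E2 over the compact region
  obtain ⟨η₁, hη₁, HE⟩ := SP.unif_cont (F := fun x : ℝ × ℝ × ℝ => E υ a x.1 x.2.1 x.2.2)
    (fun x hx => SP.contAt_E hυ0 ha0 x hx) R q₀ hp₀ hεE
  obtain ⟨η₂, hη₂, HE2⟩ := SP.unif_cont (F := fun x : ℝ × ℝ × ℝ => SP.E2 υ a x.1 x.2.1 x.2.2)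
    (fun x hx => SP.contAt_E2 hυ0 ha0 x hx) R q₀ hp₀ hc
  -- sign of E1 at the endpoints, for nearby parameters
  have hinner2 : ∀ y : ℝ, ContinuousAt (fun q : ℝ × ℝ => ((y, q.1, q.2) : ℝ × ℝ × ℝ)) q₀ :=
    fun y => (continuous_const.prodMk (continuous_fst.prodMk continuous_snd)).continuousAt
  have hc1 : ContinuousAt (fun q : ℝ × ℝ => SP.E1 υ a (ybar - δ) q.1 q.2) q₀ :=
    ContinuousAt.comp (g := fun x : ℝ × ℝ × ℝ => SP.E1 υ a x.1 x.2.1 x.2.2)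
      (f := fun q : ℝ × ℝ => ((ybar - δ, q.1, q.2) : ℝ × ℝ × ℝ))
      (SP.contAt_E1 hυ0 ha0 (ybar - δ, q₀.1, q₀.2) hp₀) (hinner2 (ybar - δ))
  have hc2 : ContinuousAt (fun q : ℝ × ℝ => SP.E1 υ a (ybar + δ) q.1 q.2) q₀ :=
    ContinuousAt.comp (g := fun x : ℝ × ℝ × ℝ => SP.E1 υ a x.1 x.2.1 x.2.2)
      (f := fun q : ℝ × ℝ => ((ybar + δ, q.1, q.2) : ℝ × ℝ × ℝ))
      (SP.contAt_E1 hυ0 ha0 (ybar + δ, q₀.1, q₀.2) hp₀) (hinner2 (ybar + δ))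
  obtain ⟨η₃, hη₃, hb3⟩ := Metric.mem_nhds_iff.1 (hc1.preimage_mem_nhds (Ioi_mem_nhds hE1L))
  obtain ⟨η₄, hη₄, hb4⟩ := Metric.mem_nhds_iff.1 (hc2.preimage_mem_nhds (Iio_mem_nhds hE1R))
  -- the final radius
  refine ⟨min (min (min (q₀.1 / 2) 1) (min η₁ η₂)) (min η₃ η₄), by positivity, ?_⟩
  intro q hqball
  have hd := Metric.mem_ball.1 hqball
  have hd1 : dist q q₀ ≤ min (q₀.1 / 2) 1 := by
    calc dist q q₀ ≤ min (min (q₀.1 / 2) 1) (min η₁ η₂) :=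
          le_trans hd.le (min_le_left _ _)
      _ ≤ _ := min_le_left _ _
  have hdη₁ : dist q q₀ ≤ η₁ := by
    calc dist q q₀ ≤ min η₁ η₂ := le_trans (le_trans hd.le (min_le_left _ _)) (min_le_right _ _)
      _ ≤ η₁ := min_le_left _ _
  have hdη₂ : dist q q₀ ≤ η₂ := by
    calc dist q q₀ ≤ min η₁ η₂ := le_trans (le_trans hd.le (min_le_left _ _)) (min_le_right _ _)
      _ ≤ η₂ := min_le_right _ _
  have hdη₃ : dist q q₀ < η₃ :=
    lt_of_lt_of_le hd (le_trans (min_le_right _ _) (min_le_left _ _))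
  have hdη₄ : dist q q₀ < η₄ :=
    lt_of_lt_of_le hd (le_trans (min_le_right _ _) (min_le_right _ _))
  have hq1 : |q.1 - q₀.1| ≤ q₀.1 / 2 :=
    le_trans (SP.dist_fst' q q₀) (le_trans hd1 (min_le_left _ _))
  rw [abs_le] at hq1
  have hp : 0 < q.1 := by linarith [hq1.1]
  -- E2 < 0 on the band for current parameters
  have hband2q : ∀ y ∈ Set.Icc (ybar - δ) (ybar + δ), SP.E2 υ a y q.1 q.2 < 0 := by
    intro y hy
    have h1 := HE2 y (hbandIcc hy) q hdη₂
    have h2 := hzmax hy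
    rw [abs_lt] at h1
    simp only [hcdef] at hc
    have h2' : SP.E2 υ a y q₀.1 q₀.2 ≤ SP.E2 υ a z q₀.1 q₀.2 := h2
    linarith [h1.2]
  -- E1 signs at the endpoints
  have hE1Lq : 0 < SP.E1 υ a (ybar - δ) q.1 q.2 := hb3 (Metric.mem_ball.2 hdη₃)
  have hE1Rq : SP.E1 υ a (ybar + δ) q.1 q.2 < 0 := hb4 (Metric.mem_ball.2 hdη₄)
  -- strict antitonicity of E1 on the band for current parameters
  have hanti_q : StrictAntiOn (fun y => SP.E1 υ a y q.1 q.2)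
      (Set.Icc (ybar - δ) (ybar + δ)) := by
    apply strictAntiOn_of_deriv_neg (convex_Icc _ _)
      (fun y _ => ((SP.hasDerivAt_E1 hυ0 ha0 hp y).continuousAt).continuousWithinAt)
    intro y hy
    rw [interior_Icc] at hy
    rw [(SP.hasDerivAt_E1 hυ0 ha0 hp y).deriv]
    exact hband2q y (Set.Ioo_subset_Icc_self hy)
  -- find the critical point ystar by the IVT
  have hIVT := intermediate_value_Icc' (f := fun y => SP.E1 υ a y q.1 q.2)
    (by linarith : ybar - δ ≤ ybar + δ)
    (fun y (_ : y ∈ Set.Icc _ _) =>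
      ((SP.hasDerivAt_E1 (μ := q.2) hυ0 ha0 hp y).continuousAt).continuousWithinAt)
  have h0mem : (0:ℝ) ∈ Set.Icc (SP.E1 υ a (ybar + δ) q.1 q.2) (SP.E1 υ a (ybar - δ) q.1 q.2) :=
    ⟨hE1Rq.le, hE1Lq.le⟩
  obtain ⟨ystar, hystar, hy0⟩ := hIVT h0mem
  change SP.E1 υ a ystar q.1 q.2 = 0 at hy0
  have hystarL : ybar - δ < ystar := by
    rcases lt_or_eq_of_le hystar.1 with h | h
    · exact h
    · exfalso; rw [← h] at hy0; rw [hy0] at hE1Lq; exact lt_irrefl 0 hE1Lq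
  have hystarR : ystar < ybar + δ := by
    rcases lt_or_eq_of_le hystar.2 with h | h
    · exact h
    · exfalso; rw [h] at hy0; rw [hy0] at hE1Rq; exact lt_irrefl 0 hE1Rq
  -- ystar is the strict max on the band
  have hEcontq : ∀ y : ℝ, ContinuousAt (fun z => E υ a z q.1 q.2) y :=
    fun y => (SP.hasDerivAt_E hυ0 ha0 hp y).continuousAt
  have hmono : StrictMonoOn (fun z => E υ a z q.1 q.2) (Set.Icc (ybar - δ) ystar) := by
    apply strictMonoOn_of_deriv_pos (convex_Icc _ _)
      (fun y _ => (hEcontq y).continuousWithinAt)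
    intro t ht
    rw [interior_Icc] at ht
    rw [(SP.hasDerivAt_E hυ0 ha0 hp t).deriv]
    have htb : t ∈ Set.Icc (ybar - δ) (ybar + δ) := ⟨ht.1.le, by linarith [ht.2]⟩
    have hlt : SP.E1 υ a ystar q.1 q.2 < SP.E1 υ a t q.1 q.2 := hanti_q htb hystar ht.2
    rw [hy0] at hlt
    exact hlt
  have hantiE : StrictAntiOn (fun z => E υ a z q.1 q.2) (Set.Icc ystar (ybar + δ)) := by
    apply strictAntiOn_of_deriv_neg (convex_Icc _ _)
      (fun y _ => (hEcontq y).continuousWithinAt)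
    intro t ht
    rw [interior_Icc] at ht
    rw [(SP.hasDerivAt_E hυ0 ha0 hp t).deriv]
    have htb : t ∈ Set.Icc (ybar - δ) (ybar + δ) := ⟨by linarith [ht.1], ht.2.le⟩
    have hlt : SP.E1 υ a t q.1 q.2 < SP.E1 υ a ystar q.1 q.2 := hanti_q hystar htb ht.1
    rw [hy0] at hlt
    exact hlt
  have hbandmax : ∀ y ∈ Set.Icc (ybar - δ) (ybar + δ), y ≠ ystar →
      E υ a y q.1 q.2 < E υ a ystar q.1 q.2 := by
    intro y hy hne
    rcases lt_or_gt_of_ne hne with h | h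
    · exact hmono ⟨hy.1, h.le⟩ ⟨hystar.1, le_rfl⟩ h
    · exact hantiE ⟨le_rfl, hystar.2⟩ ⟨h.le, hy.2⟩ h
  -- value at ystar is large
  have hEybar : |E υ a ybar q.1 q.2 - E υ a ybar q₀.1 q₀.2| < εE :=
    HE ybar (hbandIcc hybar_mem) q hdη₁
  have hEystar_ge : E υ a ybar q.1 q.2 ≤ E υ a ystar q.1 q.2 := by
    by_cases h : ybar = ystar
    · rw [h]
    · exact (hbandmax ybar hybar_mem h).le
  have hEystar_big : m - εE < E υ a ystar q.1 q.2 := by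
    rw [abs_lt] at hEybar
    rw [← hm] at hEybar
    linarith [hEybar.1]
  -- global strict maximality
  have hglobal : ∀ y : ℝ, y ≠ ystar → E υ a y q.1 q.2 < E υ a ystar q.1 q.2 := by
    intro y hne
    by_cases hyR : y ∈ Set.Icc (-R) R
    · by_cases hyB : y ∈ Set.Ioo (ybar - δ) (ybar + δ)
      · exact hbandmax y (Set.Ioo_subset_Icc_self hyB) hne
      · have hyA : y ∈ Set.Icc (-R) R \ Set.Ioo (ybar - δ) (ybar + δ) := ⟨hyR, hyB⟩
        have h1 := HE y hyR q hdη₁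
        have h2 : E υ a y q₀.1 q₀.2 ≤ m₁ :=
          (hy₁max hyA : E υ a y q₀.1 q₀.2 ≤ E υ a y₁ q₀.1 q₀.2).trans_eq hm₁def.symm
        rw [abs_lt] at h1
        have : E υ a y q.1 q.2 < m₁ + εE := by linarith [h1.2]
        simp only [hε₁def] at hεE1
        linarith
    · have hyabs : R ≤ |y| := by
        rw [Set.mem_Icc, not_and_or] at hyR
        rcases hyR with h | h
        · push_neg at h
          calc R ≤ -y := by linarith
            _ ≤ |y| := neg_le_abs y
        · push_neg at h
          calc R ≤ y := h.le
            _ ≤ |y| := le_abs_self y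
      have h1 := hcoerce q hd1 y hyabs
      linarith
  -- assemble
  refine ⟨hp, ystar, ?_, ?_, ?_⟩
  · intro y
    by_cases h : y = ystar
    · rw [h]
    · exact (hglobal y h).le
  · intro y' hy'
    by_contra hne
    have h1 := hglobal y' hne
    have h2 := hy' ystar
    linarith
  · rw [SP.deriv2_E hυ0 ha0 hp]
    exact hband2q ystar ⟨hystarL.le, hystarR.le⟩
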